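/- Let d be a positive integer and let ā = ⟨aⁱ : i < d⟩ be an independent finite sequence of conditionally convergent real series, i.e., K(ā) = {0}. Then for every vector v ∈ ℝ^d there is a permutation p of ℕ such that for each i < d the series Σ_n aⁱ_{p(n)} converges to vᵢ. -/

import Mathlib

open Filter

/-- A real series is conditionally convergent: its partial sums converge
but the series of absolute values diverges. -/
def CondConv (a : ℕ → ℝ) : Prop :=
  (∃ l : ℝ, Tendsto (fun N => ∑ n ∈ Finset.range N, a n) atTop (nhds l)) ∧
    ¬ Summable fun n => |a n|

open Module


section Frac
variable {E : Type*} [NormedAddCommGroup E] [NormedSpace ℝ E] [FiniteDimensional ℝ E]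

lemma frac_step (F : Finset ℕ) (y : ℕ → E) (l : ℕ → ℝ)
    (hl : ∀ i ∈ F, l i ∈ Set.Icc (0:ℝ) 1)
    (hcard : finrank ℝ E < (F.filter (fun i => l i ≠ 0 ∧ l i ≠ 1)).card) :
    ∃ m : ℕ → ℝ, (∀ i ∈ F, m i ∈ Set.Icc (0:ℝ) 1) ∧
      (∑ i ∈ F, m i • y i = ∑ i ∈ F, l i • y i) ∧
      ((F.filter (fun i => m i ≠ 0 ∧ m i ≠ 1)).card
        < (F.filter (fun i => l i ≠ 0 ∧ l i ≠ 1)).card) := by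
  classical
  set T : Finset ℕ := F.filter (fun i => l i ≠ 0 ∧ l i ≠ 1) with hT
  -- a nontrivial relation among the y i, i ∈ T
  have hnotinj : ¬ Function.Injective
      (∑ i : T, (LinearMap.proj i).smulRight (y i) : (T → ℝ) →ₗ[ℝ] E) := by
    intro hinj
    have := LinearMap.finrank_le_finrank_of_injective hinj
    rw [Module.finrank_pi ℝ] at this
    simp only [Fintype.card_coe] at this
    omega
  obtain ⟨g, hg0, hgne⟩ : ∃ g : T → ℝ,
      (∑ i : T, (LinearMap.proj i).smulRight (y i) : (T → ℝ) →ₗ[ℝ] E) g = 0 ∧ g ≠ 0 := by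
    by_contra h
    exact hnotinj ((injective_iff_map_eq_zero _).2 fun g hg => by
      by_contra hne; exact h ⟨g, hg, hne⟩)
  have hφ : ∀ g : T → ℝ,
      (∑ i : T, (LinearMap.proj i).smulRight (y i) : (T → ℝ) →ₗ[ℝ] E) g
        = ∑ i : T, g i • y i := by
    intro g
    simp [LinearMap.sum_apply, LinearMap.smulRight_apply]
  rw [hφ] at hg0
  set e : ℕ → ℝ := fun n => if h : n ∈ T then g ⟨n, h⟩ else 0 with he
  have heT : ∀ i ∉ T, e i = 0 := fun i hi => dif_neg hi
  have hesum : ∑ i ∈ F, e i • y i = 0 := by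
    have h1 : ∑ i ∈ F, e i • y i = ∑ i ∈ T, e i • y i := by
      refine (Finset.sum_subset (Finset.filter_subset _ _) ?_).symm
      intro i _ hiT
      rw [heT i hiT, zero_smul]
    have h2 : ∑ i ∈ T, e i • y i = ∑ i : T, g i • y i := by
      rw [← Finset.sum_attach T (fun i => e i • y i), Finset.univ_eq_attach]
      refine Finset.sum_congr rfl fun i _ => ?_
      have : e ↑i = g i := by simp [he, i.2]
      rw [this]
    rw [h1, h2, hg0]
  set Ts : Finset ℕ := T.filter (fun i => e i ≠ 0) with hTs
  have hTsne : Ts.Nonempty := by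
    obtain ⟨j, hj⟩ := Function.ne_iff.1 hgne
    refine ⟨(j : ℕ), Finset.mem_filter.2 ⟨j.2, ?_⟩⟩
    have : e ↑j = g j := by simp [he, j.2]
    simpa [this] using hj
  set c : ℕ → ℝ := fun i => if 0 < e i then (1 - l i)/(e i) else l i/(-(e i)) with hc
  have hfrac : ∀ i ∈ T, 0 < l i ∧ l i < 1 := by
    intro i hi
    obtain ⟨hiF, h0, h1⟩ := Finset.mem_filter.1 hi
    obtain ⟨ha, hb⟩ := hl i hiF
    exact ⟨lt_of_le_of_ne ha (Ne.symm h0), lt_of_le_of_ne hb h1⟩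
  have hcpos : ∀ i ∈ Ts, 0 < c i := by
    intro i hi
    obtain ⟨hiT, hie⟩ := Finset.mem_filter.1 hi
    obtain ⟨h0, h1⟩ := hfrac i hiT
    by_cases hpos : 0 < e i
    · simp only [hc, if_pos hpos]
      exact div_pos (by linarith) hpos
    · simp only [hc, if_neg hpos]
      have : e i < 0 := lt_of_le_of_ne (not_lt.1 hpos) hie
      exact div_pos h0 (by linarith)
  obtain ⟨i0, hi0Ts, hmin⟩ := Ts.exists_min_image c hTsne
  have hi0T : i0 ∈ T := (Finset.mem_filter.1 hi0Ts).1
  have hi0e : e i0 ≠ 0 := (Finset.mem_filter.1 hi0Ts).2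
  set m : ℕ → ℝ := fun i => l i + c i0 * e i with hm
  have hezero : ∀ i, i ∉ Ts → e i = 0 := by
    intro i hi
    by_cases hiT : i ∈ T
    · by_contra hne
      exact hi (Finset.mem_filter.2 ⟨hiT, hne⟩)
    · exact heT i hiT
  have hmi : ∀ i, i ∉ Ts → m i = l i := by
    intro i hi
    simp [hm, hezero i hi]
  have hrange : ∀ i ∈ F, m i ∈ Set.Icc (0:ℝ) 1 := by
    intro i hiF
    by_cases hiTs : i ∈ Ts
    · have hci : c i0 ≤ c i := hmin i hiTs
      have hc0 : 0 < c i0 := hcpos i0 hi0Ts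
      have hie : e i ≠ 0 := (Finset.mem_filter.1 hiTs).2
      obtain ⟨h0, h1⟩ := hfrac i (Finset.mem_filter.1 hiTs).1
      by_cases hpos : 0 < e i
      · have hcieq : c i = (1 - l i)/(e i) := by simp [hc, if_pos hpos]
        constructor
        · have : 0 ≤ c i0 * e i := le_of_lt (mul_pos hc0 hpos)
          simp only [hm]; linarith
        · have : c i0 * e i ≤ c i * e i := mul_le_mul_of_nonneg_right hci (le_of_lt hpos)
          have h2 : c i * e i = 1 - l i := by
            rw [hcieq, div_mul_cancel₀]; exact ne_of_gt hpos
          simp only [hm]; linarith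
      · have hneg : e i < 0 := lt_of_le_of_ne (not_lt.1 hpos) hie
        have hcieq : c i = l i/(-(e i)) := by simp [hc, if_neg hpos]
        constructor
        · have : c i * e i ≤ c i0 * e i := by
            exact mul_le_mul_of_nonpos_right hci (le_of_lt hneg)
          have h2 : c i * e i = - l i := by
            rw [hcieq, div_neg, neg_mul, div_mul_cancel₀ _ hie]
          simp only [hm]; linarith
        · have : c i0 * e i ≤ 0 := mul_nonpos_of_nonneg_of_nonpos (le_of_lt hc0) (le_of_lt hneg)
          simp only [hm]; linarith
    · rw [hmi i hiTs]; exact hl i hiF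
  have hsum : ∑ i ∈ F, m i • y i = ∑ i ∈ F, l i • y i := by
    have : ∀ i ∈ F, m i • y i = l i • y i + (c i0) • (e i • y i) := by
      intro i _
      simp only [hm, add_smul, smul_smul]
    rw [Finset.sum_congr rfl this, Finset.sum_add_distrib, ← Finset.smul_sum, hesum,
      smul_zero, add_zero]
  have hmi0 : m i0 = 0 ∨ m i0 = 1 := by
    by_cases hpos : 0 < e i0
    · right
      have : c i0 = (1 - l i0)/(e i0) := by simp [hc, if_pos hpos]
      simp only [hm, this]
      field_simp
      ring
    · left
      have hneg : e i0 < 0 := lt_of_le_of_ne (not_lt.1 hpos) hi0e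
      have : c i0 = l i0/(-(e i0)) := by simp [hc, if_neg hpos]
      simp only [hm, this]
      rw [div_neg, neg_mul, div_mul_cancel₀ _ hi0e, add_neg_cancel]
  have hsubset : F.filter (fun i => m i ≠ 0 ∧ m i ≠ 1) ⊆ T.erase i0 := by
    intro i hi
    obtain ⟨hiF, hm0, hm1⟩ := Finset.mem_filter.1 hi
    have hiT : i ∈ T := by
      by_contra hiT
      have : m i = l i := hmi i (fun h => hiT (Finset.mem_filter.1 h).1)
      have hl01 : l i = 0 ∨ l i = 1 := by
        by_contra h
        push_neg at h
        exact hiT (Finset.mem_filter.2 ⟨hiF, h⟩)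
      rcases hl01 with h | h
      · exact hm0 (by rw [this, h])
      · exact hm1 (by rw [this, h])
    refine Finset.mem_erase.2 ⟨?_, hiT⟩
    intro heq
    rcases hmi0 with h | h
    · exact hm0 (heq ▸ h)
    · exact hm1 (heq ▸ h)
  refine ⟨m, hrange, hsum, ?_⟩
  calc (F.filter (fun i => m i ≠ 0 ∧ m i ≠ 1)).card
      ≤ (T.erase i0).card := Finset.card_le_card hsubset
    _ < T.card := Finset.card_erase_lt_of_mem hi0T

lemma exists_fractional_le (F : Finset ℕ) (y : ℕ → E) (l : ℕ → ℝ)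
    (hl : ∀ i ∈ F, l i ∈ Set.Icc (0:ℝ) 1) :
    ∃ m : ℕ → ℝ, (∀ i ∈ F, m i ∈ Set.Icc (0:ℝ) 1) ∧
      (∑ i ∈ F, m i • y i = ∑ i ∈ F, l i • y i) ∧
      ((F.filter (fun i => m i ≠ 0 ∧ m i ≠ 1)).card ≤ finrank ℝ E) := by
  classical
  generalize hn : (F.filter (fun i => l i ≠ 0 ∧ l i ≠ 1)).card = n
  induction n using Nat.strong_induction_on generalizing l with
  | _ n ih =>
    by_cases hle : (F.filter (fun i => l i ≠ 0 ∧ l i ≠ 1)).card ≤ finrank ℝ E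
    · exact ⟨l, hl, rfl, hle⟩
    · obtain ⟨m, hmr, hms, hmc⟩ := frac_step F y l hl (not_le.1 hle)
      rw [hn] at hmc
      obtain ⟨m', hm'r, hm's, hm'c⟩ := ih _ hmc m hmr rfl
      exact ⟨m', hm'r, hm's.trans hms, hm'c⟩

lemma round_lemma (F : Finset ℕ) (x : ℕ → E) (ε : ℝ) (hε : 0 ≤ ε)
    (hx : ∀ i ∈ F, ‖x i‖ ≤ ε) (l : ℕ → ℝ) (hl : ∀ i ∈ F, l i ∈ Set.Icc (0:ℝ) 1) :
    ∃ G ⊆ F, ‖(∑ i ∈ G, x i) - ∑ i ∈ F, l i • x i‖ ≤ (finrank ℝ E : ℝ) * ε := by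
  classical
  obtain ⟨m, hmr, hms, hmc⟩ := exists_fractional_le F x l hl
  refine ⟨F.filter (fun i => m i = 1), Finset.filter_subset _ _, ?_⟩
  rw [← hms]
  have key : ∑ i ∈ F, m i • x i
      = (∑ i ∈ F.filter (fun i => m i = 1), x i)
        + ∑ i ∈ F.filter (fun i => m i ≠ 0 ∧ m i ≠ 1), m i • x i := by
    rw [← Finset.sum_filter_add_sum_filter_not F (fun i => m i = 1) (fun i => m i • x i)]
    congr 1
    · exact Finset.sum_congr rfl fun i hi => by rw [(Finset.mem_filter.1 hi).2, one_smul]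
    · symm
      apply Finset.sum_subset
      · intro i hi
        obtain ⟨hiF, h0, h1⟩ := Finset.mem_filter.1 hi
        exact Finset.mem_filter.2 ⟨hiF, h1⟩
      · intro i hi hni
        obtain ⟨hiF, h1⟩ := Finset.mem_filter.1 hi
        have h0 : m i = 0 := by
          by_contra h0
          exact hni (Finset.mem_filter.2 ⟨hiF, h0, h1⟩)
        rw [h0, zero_smul]
  rw [key]
  have : (∑ i ∈ F.filter (fun i => m i = 1), x i) -
      ((∑ i ∈ F.filter (fun i => m i = 1), x i)
        + ∑ i ∈ F.filter (fun i => m i ≠ 0 ∧ m i ≠ 1), m i • x i)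
      = - ∑ i ∈ F.filter (fun i => m i ≠ 0 ∧ m i ≠ 1), m i • x i := by abel
  rw [this, norm_neg]
  calc ‖∑ i ∈ F.filter (fun i => m i ≠ 0 ∧ m i ≠ 1), m i • x i‖
      ≤ ∑ i ∈ F.filter (fun i => m i ≠ 0 ∧ m i ≠ 1), ‖m i • x i‖ := norm_sum_le _ _
    _ ≤ ∑ _i ∈ F.filter (fun i => m i ≠ 0 ∧ m i ≠ 1), ε := by
        refine Finset.sum_le_sum fun i hi => ?_
        have hiF : i ∈ F := (Finset.mem_filter.1 hi).1
        rw [norm_smul, Real.norm_eq_abs]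
        have h01 := hmr i hiF
        have : |m i| ≤ 1 := abs_le.2 ⟨by linarith [h01.1], h01.2⟩
        calc |m i| * ‖x i‖ ≤ 1 * ε :=
              mul_le_mul this (hx i hiF) (norm_nonneg _) zero_le_one
          _ = ε := one_mul ε
    _ = ((F.filter (fun i => m i ≠ 0 ∧ m i ≠ 1)).card : ℝ) * ε := by
        rw [Finset.sum_const, nsmul_eq_mul]
    _ ≤ (finrank ℝ E : ℝ) * ε := by
        exact mul_le_mul_of_nonneg_right (Nat.cast_le.2 hmc) hε





lemma list_norm_sum_le (L : List ℕ) (x : ℕ → E) (ε : ℝ) (hε : 0 ≤ ε)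
    (hx : ∀ i ∈ L, ‖x i‖ ≤ ε) : ‖(L.map x).sum‖ ≤ L.length * ε := by
  induction L with
  | nil => simpa using hε.le
  | cons a t ih =>
    simp only [List.map_cons, List.sum_cons, List.length_cons]
    calc ‖x a + (t.map x).sum‖ ≤ ‖x a‖ + ‖(t.map x).sum‖ := norm_add_le _ _
      _ ≤ ε + t.length * ε := by
          refine add_le_add (hx a List.mem_cons_self) (ih fun i hi => hx i (List.mem_cons_of_mem a hi))
      _ = (t.length + 1) * ε := by ring
      _ = ((t.length + 1 : ℕ) : ℝ) * ε := by push_cast; ring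

lemma steinitz_aux (x : ℕ → E) (ε C : ℝ) (hε : 0 ≤ ε) (hC : 0 ≤ C) :
    ∀ n : ℕ, ∀ F : Finset ℕ, F.card = n → (∀ i ∈ F, ‖x i‖ ≤ ε) →
    (F.card ≤ finrank ℝ E ∨ ∃ l : ℕ → ℝ, (∀ i ∈ F, l i ∈ Set.Icc (0:ℝ) 1) ∧
      (∑ i ∈ F, l i) = (F.card : ℝ) - (finrank ℝ E : ℝ) ∧ ‖∑ i ∈ F, l i • x i‖ ≤ C) →
    ∃ L : List ℕ, L.Nodup ∧ L.toFinset = F ∧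
      ∀ k, ‖((L.take k).map x).sum‖ ≤ ((finrank ℝ E : ℝ) + 1) * ε + C := by
  classical
  set D := finrank ℝ E with hD
  intro n
  induction n using Nat.strong_induction_on with
  | _ n ih =>
    intro F hFcard hx hinv
    by_cases hsm : F.card ≤ D
    · -- small case: any enumeration works
      refine ⟨F.toList, F.nodup_toList, F.toList_toFinset, fun k => ?_⟩
      have h1 : ∀ i ∈ F.toList.take k, ‖x i‖ ≤ ε := fun i hi =>
        hx i (Finset.mem_toList.1 (List.mem_of_mem_take hi))
      calc ‖((F.toList.take k).map x).sum‖ ≤ (F.toList.take k).length * ε :=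
            list_norm_sum_le _ x ε hε h1
        _ ≤ (D : ℝ) * ε := by
            refine mul_le_mul_of_nonneg_right ?_ hε
            have h3 : (F.toList.take k).length ≤ F.toList.length := by
              simp [List.length_take]
            have h2 : F.toList.length = F.card := F.length_toList
            exact_mod_cast le_trans h3 (h2 ▸ hsm)
        _ ≤ ((D : ℝ) + 1) * ε + C := by nlinarith
    · -- main case
      obtain ⟨l, hlr, hlsum, hlnorm⟩ := hinv.resolve_left hsm
      have hcardD : D + 1 ≤ F.card := by omega
      have hkD : (1:ℝ) ≤ (F.card : ℝ) - (D:ℝ) := by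
        have : ((D:ℕ):ℝ) + 1 ≤ (F.card : ℝ) := by exact_mod_cast hcardD
        linarith
      have hden : (F.card : ℝ) - (D:ℝ) ≠ 0 := ne_of_gt (by linarith)
      set t : ℝ := ((F.card : ℝ) - 1 - D) / ((F.card : ℝ) - D) with ht
      have ht0 : 0 ≤ t := div_nonneg (by linarith) (by linarith)
      have ht1 : t ≤ 1 := by
        rw [ht, div_le_one (by linarith)]; linarith
      set l' : ℕ → ℝ := fun i => t * l i with hl'
      have hl'r : ∀ i ∈ F, l' i ∈ Set.Icc (0:ℝ) 1 := by
        intro i hi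
        obtain ⟨h0, h1⟩ := hlr i hi
        constructor
        · exact mul_nonneg ht0 h0
        · have h2 := mul_le_mul ht1 h1 h0 zero_le_one
          simpa [hl'] using h2
      have hl'sum : ∑ i ∈ F, l' i = (F.card : ℝ) - 1 - D := by
        simp only [hl', ← Finset.mul_sum, hlsum]
        rw [ht, div_mul_cancel₀ _ hden]
      have hl'norm : ‖∑ i ∈ F, l' i • x i‖ ≤ C := by
        have : ∑ i ∈ F, l' i • x i = t • ∑ i ∈ F, l i • x i := by
          rw [Finset.smul_sum]
          exact Finset.sum_congr rfl fun i _ => by rw [hl', smul_smul]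
        rw [this, norm_smul, Real.norm_eq_abs, abs_of_nonneg ht0]
        calc t * ‖∑ i ∈ F, l i • x i‖ ≤ 1 * C :=
              mul_le_mul ht1 hlnorm (norm_nonneg _) zero_le_one
          _ = C := one_mul C
      -- apply the fractional lemma in E × ℝ
      obtain ⟨m, hmr, hmsum, hmc⟩ :=
        exists_fractional_le (E := E × ℝ) F (fun i => (x i, (1:ℝ))) l' hl'r
      have hDE : finrank ℝ (E × ℝ) = D + 1 := by
        rw [Module.finrank_prod, Module.finrank_self]
      rw [hDE] at hmc
      have hm1 : ∑ i ∈ F, m i • x i = ∑ i ∈ F, l' i • x i := by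
        have h := congrArg Prod.fst hmsum
        simpa [Prod.fst_sum] using h
      have hm2 : ∑ i ∈ F, m i = (F.card : ℝ) - 1 - D := by
        have h := congrArg Prod.snd hmsum
        simp only [Prod.snd_sum, Prod.smul_snd, smul_eq_mul, mul_one] at h
        rw [h, hl'sum]
      have hmnorm : ‖∑ i ∈ F, m i • x i‖ ≤ C := by rw [hm1]; exact hl'norm
      -- find a zero coordinate
      have hzero : ∃ i0 ∈ F, m i0 = 0 := by
        by_contra hno
        push_neg at hno
        set Tm := F.filter (fun i => m i ≠ 0 ∧ m i ≠ 1) with hTm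
        set Ones := F.filter (fun i => m i = 1) with hOnes
        have hsplit := Finset.sum_filter_add_sum_filter_not F (fun i => m i = 1) m
        have hones : ∑ i ∈ Ones, m i = (Ones.card : ℝ) := by
          rw [Finset.sum_congr rfl (fun i hi => (Finset.mem_filter.1 hi).2),
            Finset.sum_const, nsmul_eq_mul, mul_one]
        have hTm_eq : F.filter (fun i => ¬ m i = 1) = Tm := by
          ext i
          simp only [Finset.mem_filter, hTm]
          constructor
          · rintro ⟨hiF, h1⟩; exact ⟨hiF, hno i hiF, h1⟩
          · rintro ⟨hiF, _, h1⟩; exact ⟨hiF, h1⟩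
        have hcards : Ones.card + Tm.card = F.card := by
          rw [← hTm_eq]
          exact Finset.card_filter_add_card_filter_not _
        rw [hTm_eq, hones, hm2] at hsplit
        rcases Finset.eq_empty_or_nonempty Tm with hemp | hne
        · rw [hemp, Finset.sum_empty, add_zero] at hsplit
          have : Ones.card = F.card := by
            rw [hemp] at hcards; simpa using hcards
          rw [this] at hsplit
          have hD0 : (0:ℝ) ≤ (D:ℝ) := Nat.cast_nonneg D
          linarith
        · have hpos : 0 < ∑ i ∈ Tm, m i := by
            refine Finset.sum_pos (fun i hi => ?_) hne
            obtain ⟨hiF, h0, _⟩ := Finset.mem_filter.1 hi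
            exact lt_of_le_of_ne (hmr i hiF).1 (Ne.symm h0)
          have hOc : ((F.card : ℝ) - ((D:ℝ) + 1)) ≤ (Ones.card : ℝ) := by
            have h1 : (Ones.card : ℝ) + (Tm.card : ℝ) = (F.card : ℝ) := by
              exact_mod_cast hcards
            have h2 : (Tm.card : ℝ) ≤ (D:ℝ) + 1 := by exact_mod_cast hmc
            linarith
          linarith
      obtain ⟨i0, hi0F, hmi0⟩ := hzero
      -- recurse on F.erase i0
      set F' := F.erase i0 with hF'
      have hF'card : F'.card = F.card - 1 := Finset.card_erase_of_mem hi0F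
      have hlt : F'.card < n := by omega
      have hx' : ∀ i ∈ F', ‖x i‖ ≤ ε := fun i hi => hx i (Finset.mem_of_mem_erase hi)
      have hinv' : F'.card ≤ D ∨ ∃ l : ℕ → ℝ, (∀ i ∈ F', l i ∈ Set.Icc (0:ℝ) 1) ∧
          (∑ i ∈ F', l i) = (F'.card : ℝ) - (D : ℝ) ∧ ‖∑ i ∈ F', l i • x i‖ ≤ C := by
        right
        refine ⟨m, fun i hi => hmr i (Finset.mem_of_mem_erase hi), ?_, ?_⟩
        · rw [Finset.sum_erase _ hmi0, hm2, hF'card]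
          have : (1:ℕ) ≤ F.card := by omega
          push_cast [Nat.cast_sub this]
          ring
        · rw [Finset.sum_erase _ (by rw [hmi0, zero_smul])]
          exact hmnorm
      obtain ⟨L', hnd', htF', hbound'⟩ := ih F'.card hlt F' rfl hx' hinv'
      -- total sum bound
      have hFx : ‖∑ i ∈ F, x i‖ ≤ ((D:ℝ) + 1) * ε + C := by
        have hdecomp : ∑ i ∈ F, x i
            = (∑ i ∈ F, (1 - m i) • x i) + ∑ i ∈ F, m i • x i := by
          rw [← Finset.sum_add_distrib]
          refine Finset.sum_congr rfl fun i _ => ?_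
          rw [← add_smul]; simp
        have hb1 : ‖∑ i ∈ F, (1 - m i) • x i‖ ≤ ((D:ℝ) + 1) * ε := by
          calc ‖∑ i ∈ F, (1 - m i) • x i‖ ≤ ∑ i ∈ F, ‖(1 - m i) • x i‖ :=
                norm_sum_le _ _
            _ ≤ ∑ i ∈ F, (1 - m i) * ε := by
                refine Finset.sum_le_sum fun i hi => ?_
                rw [norm_smul, Real.norm_eq_abs, abs_of_nonneg (by linarith [(hmr i hi).2])]
                exact mul_le_mul_of_nonneg_left (hx i hi) (by linarith [(hmr i hi).2])
            _ = ((D:ℝ) + 1) * ε := by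
                rw [← Finset.sum_mul, Finset.sum_sub_distrib, Finset.sum_const,
                  nsmul_eq_mul, mul_one, hm2]
                ring_nf
        calc ‖∑ i ∈ F, x i‖ ≤ ‖∑ i ∈ F, (1 - m i) • x i‖ + ‖∑ i ∈ F, m i • x i‖ := by
              rw [hdecomp]; exact norm_add_le _ _
          _ ≤ ((D:ℝ) + 1) * ε + C := add_le_add hb1 hmnorm
      -- assemble list
      have hi0L' : i0 ∉ L' := by
        intro h
        have h2 : i0 ∈ F' := htF' ▸ List.mem_toFinset.2 h
        rw [hF'] at h2
        exact Finset.notMem_erase i0 F h2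
      refine ⟨L' ++ [i0], ?_, ?_, ?_⟩
      · refine List.Nodup.append hnd' (List.nodup_singleton _) ?_
        intro a ha hb
        rw [List.mem_singleton] at hb
        exact hi0L' (hb ▸ ha)
      · rw [List.toFinset_append, htF']
        simp only [List.toFinset_cons, List.toFinset_nil, insert_empty_eq]
        rw [Finset.union_comm]
        simpa using Finset.insert_erase hi0F
      · intro j
        by_cases hj : j ≤ L'.length
        · rw [List.take_append_of_le_length hj]
          exact hbound' j
        · have htake : (L' ++ [i0]).take j = L' ++ [i0] := by
            refine List.take_of_length_le ?_
            simp only [List.length_append, List.length_singleton]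
            omega
          rw [htake]
          have hsum : (((L' ++ [i0])).map x).sum = ∑ i ∈ F, x i := by
            have hnd : (L' ++ [i0]).Nodup := by
              refine List.Nodup.append hnd' (List.nodup_singleton _) ?_
              intro a ha hb
              rw [List.mem_singleton] at hb
              exact hi0L' (hb ▸ ha)
            have htf : (L' ++ [i0]).toFinset = F := by
              rw [List.toFinset_append, htF']
              simp only [List.toFinset_cons, List.toFinset_nil, insert_empty_eq]
              rw [Finset.union_comm]
              simpa using Finset.insert_erase hi0F
            rw [← htf, List.sum_toFinset _ hnd]
          rw [hsum]
          exact hFx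

lemma steinitz_confine (F : Finset ℕ) (x : ℕ → E) (ε C : ℝ) (hε : 0 ≤ ε)
    (hx : ∀ i ∈ F, ‖x i‖ ≤ ε) (hC : ‖∑ i ∈ F, x i‖ ≤ C) :
    ∃ L : List ℕ, L.Nodup ∧ L.toFinset = F ∧
      ∀ k, ‖((L.take k).map x).sum‖ ≤ ((finrank ℝ E : ℝ) + 1) * ε + C := by
  classical
  have hC0 : 0 ≤ C := le_trans (norm_nonneg _) hC
  set D := finrank ℝ E with hD
  refine steinitz_aux x ε C hε hC0 F.card F rfl hx ?_
  by_cases hsm : F.card ≤ D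
  · exact Or.inl hsm
  · right
    have hpos : (0:ℝ) < (F.card : ℝ) := by
      have : 0 < F.card := by omega
      exact_mod_cast this
    have hDk : (D:ℝ) ≤ (F.card : ℝ) := by
      have : D ≤ F.card := by omega
      exact_mod_cast this
    set t : ℝ := ((F.card : ℝ) - D) / (F.card : ℝ) with htdef
    have ht0 : 0 ≤ t := div_nonneg (by linarith) (by linarith)
    have ht1 : t ≤ 1 := by rw [htdef, div_le_one hpos]; linarith
    refine ⟨fun _ => t, fun i _ => ⟨ht0, ht1⟩, ?_, ?_⟩
    · rw [Finset.sum_const, nsmul_eq_mul, htdef, mul_div_cancel₀ _ (ne_of_gt hpos)]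
    · have : ∑ i ∈ F, t • x i = t • ∑ i ∈ F, x i := (Finset.smul_sum).symm
      rw [this, norm_smul, Real.norm_eq_abs, abs_of_nonneg ht0]
      calc t * ‖∑ i ∈ F, x i‖ ≤ 1 * C := mul_le_mul ht1 hC (norm_nonneg _) zero_le_one
        _ = C := one_mul C

end Frac

section Reach
variable {d : ℕ} {A : ℕ → (Fin d → ℝ)} {σ : Fin d → ℝ}

lemma A_tendsto_zero (hσ : Tendsto (fun N => ∑ n ∈ Finset.range N, A n) atTop (nhds σ)) :
    Tendsto A atTop (nhds 0) := by
  have h := (hσ.comp (tendsto_add_atTop_nat 1)).sub hσ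
  rw [sub_self] at h
  refine h.congr fun n => ?_
  simp [Finset.sum_range_succ]

lemma reach_dir (hσ : Tendsto (fun N => ∑ n ∈ Finset.range N, A n) atTop (nhds σ))
    (hns : ∀ c : Fin d → ℝ, c ≠ 0 → ¬ Summable (fun n => |∑ i, c i * A n i|))
    (c : Fin d → ℝ) (hc : c ≠ 0) (E0 : Finset ℕ) (ε : ℝ) (hε : 0 < ε) (R : ℝ) :
    ∃ G : Finset ℕ, (∀ n ∈ G, n ∉ E0 ∧ ‖A n‖ ≤ ε ∧ 0 < ∑ i, c i * A n i) ∧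
      R ≤ ∑ n ∈ G, ∑ i, c i * A n i := by
  classical
  set t : ℕ → ℝ := fun n => ∑ i, c i * A n i with htdef
  have htc : Tendsto (fun N => ∑ n ∈ Finset.range N, t n) atTop (nhds (∑ i, c i * σ i)) := by
    have heq : ∀ N, ∑ n ∈ Finset.range N, t n
        = ∑ i, c i * (∑ n ∈ Finset.range N, A n) i := by
      intro N
      rw [Finset.sum_comm]
      refine Finset.sum_congr rfl fun i _ => ?_
      rw [← Finset.mul_sum, Finset.sum_apply]
    have hcoord : ∀ i, Tendsto (fun N => (∑ n ∈ Finset.range N, A n) i) atTop (nhds (σ i)) :=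
      fun i => (tendsto_pi_nhds.1 hσ) i
    have := tendsto_finset_sum (Finset.univ : Finset (Fin d))
      (fun i _ => (tendsto_const_nhds (x := c i)).mul (hcoord i))
    exact Tendsto.congr (fun N => (heq N).symm) this
  have hdiv : Tendsto (fun N => ∑ n ∈ Finset.range N, |t n|) atTop atTop :=
    (not_summable_iff_tendsto_nat_atTop_of_nonneg (fun n => abs_nonneg _)).1 (hns c hc)
  have hmax : ∀ x : ℝ, max x 0 = (x + |x|)/2 := by
    intro x
    rcases le_or_gt 0 x with h | h
    · rw [max_eq_left h, abs_of_nonneg h]; ring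
    · rw [max_eq_right h.le, abs_of_neg h]; ring
  have hposdiv : Tendsto (fun N => ∑ n ∈ Finset.range N, max (t n) 0) atTop atTop := by
    have heq : ∀ N, ∑ n ∈ Finset.range N, max (t n) 0
        = ((∑ n ∈ Finset.range N, t n) + (∑ n ∈ Finset.range N, |t n|))/2 := by
      intro N
      rw [← Finset.sum_add_distrib, Finset.sum_div]
      exact Finset.sum_congr rfl fun n _ => hmax (t n)
    have := (htc.add_atTop hdiv).atTop_div_const (two_pos)
    exact Tendsto.congr (fun N => (heq N).symm) this
  -- bad set
  obtain ⟨N0, hN0⟩ : ∃ N0, ∀ n ≥ N0, ‖A n‖ ≤ ε := by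
    have h := (A_tendsto_zero hσ)
    rw [Metric.tendsto_atTop] at h
    obtain ⟨N0, hN0⟩ := h ε hε
    exact ⟨N0, fun n hn => by simpa [dist_eq_norm] using (hN0 n hn).le⟩
  set B : Finset ℕ := E0 ∪ Finset.range N0 with hB
  set CB : ℝ := ∑ n ∈ B, max (t n) 0 with hCB
  obtain ⟨N, hN⟩ := (hposdiv.eventually_ge_atTop (R + CB)).exists
  set G : Finset ℕ := ((Finset.range N).filter (fun n => n ∉ B)).filter (fun n => 0 < t n)
    with hG
  have hGprop : ∀ n ∈ G, n ∉ E0 ∧ ‖A n‖ ≤ ε ∧ 0 < t n := by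
    intro n hn
    obtain ⟨hn1, hn2⟩ := Finset.mem_filter.1 hn
    obtain ⟨_, hnB⟩ := Finset.mem_filter.1 hn1
    have hnE0 : n ∉ E0 := fun h => hnB (Finset.mem_union_left _ h)
    have hnR : n ∉ Finset.range N0 := fun h => hnB (Finset.mem_union_right _ h)
    exact ⟨hnE0, hN0 n (not_lt.1 fun h => hnR (Finset.mem_range.2 h)), hn2⟩
  refine ⟨G, hGprop, ?_⟩
  -- sum bound
  have h1 := Finset.sum_filter_add_sum_filter_not (Finset.range N) (fun n => n ∉ B)
    (fun n => max (t n) 0)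
  have h2 : ∑ n ∈ (Finset.range N).filter (fun n => ¬ n ∉ B), max (t n) 0 ≤ CB := by
    refine Finset.sum_le_sum_of_subset_of_nonneg ?_ (fun n _ _ => le_max_right _ _)
    intro n hn
    obtain ⟨_, hnB⟩ := Finset.mem_filter.1 hn
    exact not_not.1 hnB
  have h3 : ∑ n ∈ (Finset.range N).filter (fun n => n ∉ B), max (t n) 0
      = ∑ n ∈ G, t n := by
    rw [← Finset.sum_filter_add_sum_filter_not ((Finset.range N).filter (fun n => n ∉ B))
      (fun n => 0 < t n) (fun n => max (t n) 0)]
    have hz : ∑ n ∈ ((Finset.range N).filter (fun n => n ∉ B)).filter (fun n => ¬ 0 < t n),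
        max (t n) 0 = 0 := by
      refine Finset.sum_eq_zero fun n hn => ?_
      have := (Finset.mem_filter.1 hn).2
      rw [max_eq_right (not_lt.1 this)]
    rw [hz, add_zero]
    exact Finset.sum_congr rfl fun n hn => max_eq_left (Finset.mem_filter.1 hn).2.le
  have h4 : R + CB ≤ ∑ n ∈ Finset.range N, max (t n) 0 := hN
  rw [← h1, h3] at h4
  linarith

lemma reach (hσ : Tendsto (fun N => ∑ n ∈ Finset.range N, A n) atTop (nhds σ))
    (hns : ∀ c : Fin d → ℝ, c ≠ 0 → ¬ Summable (fun n => |∑ i, c i * A n i|))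
    (E0 : Finset ℕ) (ε : ℝ) (hε : 0 < ε) (w : Fin d → ℝ) :
    ∃ G : Finset ℕ, (∀ n ∈ G, n ∉ E0 ∧ ‖A n‖ ≤ ε) ∧
      ‖(∑ n ∈ G, A n) - w‖ ≤ ((d:ℝ) + 1) * ε := by
  classical
  set S : Set (Fin d → ℝ) :=
    {z | ∃ G : Finset ℕ, (∀ n ∈ G, n ∉ E0 ∧ ‖A n‖ ≤ ε) ∧ z = ∑ n ∈ G, A n} with hS
  have hS0 : (0 : Fin d → ℝ) ∈ S := ⟨∅, by simp, by simp⟩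
  -- w is in the closure of the convex hull of S
  have hw : w ∈ closure (convexHull ℝ S) := by
    by_contra hcon
    obtain ⟨f, u, hfu, hufw⟩ := geometric_hahn_banach_closed_point
      ((convex_convexHull ℝ S).closure) isClosed_closure hcon
    set c : Fin d → ℝ := fun i => f (fun j => if i = j then 1 else 0) with hcdef
    have hfx : ∀ x : Fin d → ℝ, f x = ∑ i, x i * c i := by
      intro x
      conv_lhs => rw [pi_eq_sum_univ x]
      rw [map_sum]
      exact Finset.sum_congr rfl fun i _ => by rw [map_smul, smul_eq_mul]
    have hu0 : 0 < u := by
      have := hfu 0 (subset_closure (subset_convexHull ℝ S hS0))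
      simpa using this
    have hc : c ≠ 0 := by
      intro hc0
      have : f w = 0 := by rw [hfx]; simp [hc0]
      rw [this] at hufw
      linarith
    obtain ⟨G, hG1, hG2⟩ := reach_dir hσ hns c hc E0 ε hε (u + 1)
    have hzS : (∑ n ∈ G, A n) ∈ S := ⟨G, fun n hn => ⟨(hG1 n hn).1, (hG1 n hn).2.1⟩, rfl⟩
    have hlt := hfu _ (subset_closure (subset_convexHull ℝ S hzS))
    have hfz : f (∑ n ∈ G, A n) = ∑ n ∈ G, ∑ i, c i * A n i := by
      rw [map_sum]
      refine Finset.sum_congr rfl fun n _ => ?_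
      rw [hfx]
      exact Finset.sum_congr rfl fun i _ => mul_comm _ _
    rw [hfz] at hlt
    linarith
  -- extract a convex combination within ε of w
  obtain ⟨z, hzhull, hdistwz⟩ := Metric.mem_closure_iff.1 hw ε hε
  rw [convexHull_eq] at hzhull
  obtain ⟨ι, tt, μ, pz, hμ0, hμ1, hpz, hcm⟩ := hzhull
  rw [Finset.centerMass_eq_of_sum_1 _ _ hμ1] at hcm
  have hpz' : ∀ j : ι, ∃ Gj : Finset ℕ, (∀ n ∈ Gj, n ∉ E0 ∧ ‖A n‖ ≤ ε) ∧
      (j ∈ tt → pz j = ∑ n ∈ Gj, A n) := by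
    intro j
    by_cases hj : j ∈ tt
    · obtain ⟨Gj, h1, h2⟩ := hpz j hj
      exact ⟨Gj, h1, fun _ => h2⟩
    · exact ⟨∅, by simp, fun h => absurd h hj⟩
  choose Gf hGf1 hGf2 using hpz'
  set U : Finset ℕ := tt.biUnion Gf with hU
  set lam : ℕ → ℝ := fun n => ∑ j ∈ tt.filter (fun j => n ∈ Gf j), μ j with hlam
  have hUprop : ∀ n ∈ U, n ∉ E0 ∧ ‖A n‖ ≤ ε := by
    intro n hn
    obtain ⟨j, _, hj2⟩ := Finset.mem_biUnion.1 hn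
    exact hGf1 j n hj2
  have hlamr : ∀ n ∈ U, lam n ∈ Set.Icc (0:ℝ) 1 := by
    intro n _
    constructor
    · exact Finset.sum_nonneg fun j hj => hμ0 j (Finset.mem_filter.1 hj).1
    · rw [← hμ1]
      exact Finset.sum_le_sum_of_subset_of_nonneg (Finset.filter_subset _ _)
        (fun j hj _ => hμ0 j hj)
  have hcomb : ∑ n ∈ U, lam n • A n = z := by
    calc ∑ n ∈ U, lam n • A n
        = ∑ n ∈ U, ∑ j ∈ tt.filter (fun j => n ∈ Gf j), μ j • A n := by
          exact Finset.sum_congr rfl fun n _ => by rw [hlam]; rw [Finset.sum_smul]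
      _ = ∑ n ∈ U, ∑ j ∈ tt, if n ∈ Gf j then μ j • A n else 0 := by
          exact Finset.sum_congr rfl fun n _ => Finset.sum_filter _ _
      _ = ∑ j ∈ tt, ∑ n ∈ U, if n ∈ Gf j then μ j • A n else 0 := Finset.sum_comm
      _ = ∑ j ∈ tt, ∑ n ∈ U.filter (fun n => n ∈ Gf j), μ j • A n := by
          exact Finset.sum_congr rfl fun j _ => (Finset.sum_filter _ _).symm
      _ = ∑ j ∈ tt, ∑ n ∈ Gf j, μ j • A n := by
          refine Finset.sum_congr rfl fun j hj => ?_
          congr 1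
          ext n
          simp only [Finset.mem_filter]
          exact ⟨fun h => h.2, fun h => ⟨Finset.mem_biUnion.2 ⟨j, hj, h⟩, h⟩⟩
      _ = ∑ j ∈ tt, μ j • ∑ n ∈ Gf j, A n := by
          exact Finset.sum_congr rfl fun j _ => (Finset.smul_sum).symm
      _ = ∑ j ∈ tt, μ j • pz j := by
          exact Finset.sum_congr rfl fun j hj => by rw [hGf2 j hj]
      _ = z := hcm
  obtain ⟨G0, hG0U, hG0⟩ := round_lemma U A ε hε.le (fun n hn => (hUprop n hn).2) lam hlamr
  rw [hcomb] at hG0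
  have hfr : (finrank ℝ (Fin d → ℝ) : ℝ) = (d : ℝ) := by
    simp [Module.finrank_pi]
  rw [hfr] at hG0
  refine ⟨G0, fun n hn => hUprop n (hG0U hn), ?_⟩
  have hzw : ‖z - w‖ ≤ ε := by
    rw [dist_comm] at hdistwz
    rw [← dist_eq_norm]
    exact hdistwz.le
  calc ‖(∑ n ∈ G0, A n) - w‖
      ≤ ‖(∑ n ∈ G0, A n) - z‖ + ‖z - w‖ := norm_sub_le_norm_sub_add_norm_sub _ _ _
    _ ≤ (d:ℝ) * ε + ε := add_le_add hG0 hzw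
    _ = ((d:ℝ) + 1) * ε := by ring


lemma exists_fresh (L : List ℕ) : ∃ n, n ∉ L := by
  obtain ⟨n, hn⟩ := Finset.exists_notMem L.toFinset
  exact ⟨n, fun h => hn (List.mem_toFinset.2 h)⟩

lemma step_lemma (hσ : Tendsto (fun N => ∑ n ∈ Finset.range N, A n) atTop (nhds σ))
    (hns : ∀ c : Fin d → ℝ, c ≠ 0 → ¬ Summable (fun n => |∑ i, c i * A n i|))
    (v : Fin d → ℝ) (L : List ℕ) (ε : ℝ) :
    ∃ L' : List ℕ, (L.Nodup ∧ 0 < ε) →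
      (L'.Nodup ∧ (L <+: L') ∧ L.length < L'.length ∧
       (Nat.find (exists_fresh L) ∈ L') ∧
       (∀ j, L.length < j → ‖(((L'.take j).map A).sum) - v‖ ≤
          2*‖(L.map A).sum + A (Nat.find (exists_fresh L)) - v‖ + 3*((d:ℝ)+1)*ε) ∧
       ‖((L'.map A).sum) - v‖ ≤ ((d:ℝ)+1)*ε) := by
  classical
  by_cases hcond : L.Nodup ∧ 0 < ε
  swap
  · exact ⟨L, fun h => absurd h hcond⟩
  obtain ⟨hL, hε⟩ := hcond
  have hεd : 0 < ((d:ℝ)+1)*ε := by positivity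
  set m := Nat.find (exists_fresh L) with hmdef
  have hm : m ∉ L := Nat.find_spec (exists_fresh L)
  set s := (L.map A).sum with hsdef
  set r1 := ‖s + A m - v‖ with hr1def
  have hr10 : 0 ≤ r1 := norm_nonneg _
  obtain ⟨G, hG1, hG2⟩ := reach hσ hns (insert m L.toFinset) ε hε (v - (s + A m))
  have hGnorm : ‖∑ n ∈ G, A n‖ ≤ r1 + ((d:ℝ)+1)*ε := by
    have h1 := norm_add_le ((∑ n ∈ G, A n) - (v - (s + A m))) (v - (s + A m))
    rw [sub_add_cancel] at h1
    have h2 : ‖v - (s + A m)‖ = r1 := norm_sub_rev _ _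
    linarith
  obtain ⟨LG, hLGnd, hLGfin, hLGbound⟩ :=
    steinitz_confine G A ε (r1 + ((d:ℝ)+1)*ε) hε.le (fun i hi => (hG1 i hi).2) hGnorm
  have hfr : (finrank ℝ (Fin d → ℝ) : ℝ) = (d : ℝ) := by simp [Module.finrank_pi]
  rw [hfr] at hLGbound
  have hLGG : ∀ n, n ∈ LG ↔ n ∈ G := by
    intro n
    rw [← hLGfin, List.mem_toFinset]
  have hmLG : m ∉ LG := by
    intro h
    have := (hG1 m ((hLGG m).1 h)).1
    exact this (Finset.mem_insert_self m _)
  have hdisj : ∀ a ∈ L, a ∉ m :: LG := by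
    intro a ha hmem
    rcases List.mem_cons.1 hmem with h | h
    · exact hm (h ▸ ha)
    · exact (hG1 a ((hLGG a).1 h)).1
        (Finset.mem_insert_of_mem (List.mem_toFinset.2 ha))
  have hLGsum : (LG.map A).sum = ∑ n ∈ G, A n := by
    rw [← hLGfin, List.sum_toFinset _ hLGnd]
  refine ⟨L ++ m :: LG, fun _ => ?_⟩
  have hnd : (L ++ m :: LG).Nodup :=
    List.Nodup.append hL (List.nodup_cons.2 ⟨hmLG, hLGnd⟩) hdisj
  have htotsum : ((L ++ m :: LG).map A).sum = s + A m + (LG.map A).sum := by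
    rw [List.map_append, List.sum_append, List.map_cons, List.sum_cons]
    abel
  refine ⟨hnd, List.prefix_append _ _, by simp, ?_, ?_, ?_⟩
  · exact List.mem_append_right _ List.mem_cons_self
  · -- intermediate prefix bounds
    intro j hj
    have htake : (L ++ m :: LG).take j = L ++ m :: LG.take (j - L.length - 1) := by
      have h2 : List.take (j - L.length) (m :: LG) = m :: List.take (j - L.length - 1) LG := by
        obtain ⟨k, hk⟩ : ∃ k, j - L.length = k + 1 := ⟨j - L.length - 1, by omega⟩
        rw [hk, List.take_succ_cons]
        norm_num
      rw [List.take_append, List.take_of_length_le (le_of_lt hj), h2]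
    rw [htake]
    have hsum : ((L ++ m :: LG.take (j - L.length - 1)).map A).sum
        = s + A m + ((LG.take (j - L.length - 1)).map A).sum := by
      rw [List.map_append, List.sum_append, List.map_cons, List.sum_cons]
      abel
    rw [hsum]
    have hP := hLGbound (j - L.length - 1)
    have harr : s + A m + ((LG.take (j - L.length - 1)).map A).sum - v
        = (s + A m - v) + ((LG.take (j - L.length - 1)).map A).sum := by abel
    rw [harr]
    calc ‖(s + A m - v) + ((LG.take (j - L.length - 1)).map A).sum‖
        ≤ r1 + ‖((LG.take (j - L.length - 1)).map A).sum‖ := norm_add_le _ _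
      _ ≤ r1 + (((d:ℝ) + 1) * ε + (r1 + ((d:ℝ)+1)*ε)) := by linarith
      _ ≤ 2*r1 + 3*((d:ℝ)+1)*ε := by linarith
  · -- endpoint bound
    rw [htotsum, hLGsum]
    have harr : s + A m + (∑ n ∈ G, A n) - v = (∑ n ∈ G, A n) - (v - (s + A m)) := by
      abel
    rw [harr]
    exact hG2


lemma main_perm (hσ : Tendsto (fun N => ∑ n ∈ Finset.range N, A n) atTop (nhds σ))
    (hns : ∀ c : Fin d → ℝ, c ≠ 0 → ¬ Summable (fun n => |∑ i, c i * A n i|))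
    (v : Fin d → ℝ) :
    ∃ p : Equiv.Perm ℕ,
      Tendsto (fun N => ∑ n ∈ Finset.range N, A (p n)) atTop (nhds v) := by
  classical
  have hstep := fun (L : List ℕ) (ε : ℝ) => step_lemma hσ hns v L ε
  choose stepf hstepf using hstep
  set X : ℕ → List ℕ := fun k => Nat.rec [] (fun k Lk => stepf Lk (1/(k+1))) k with hX
  have hXsucc : ∀ k, X (k+1) = stepf (X k) (1/(k+1)) := fun k => rfl
  have hεpos : ∀ k : ℕ, 0 < (1:ℝ)/(k+1) := fun k => by positivity
  have hnd : ∀ k, (X k).Nodup := by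
    intro k
    induction k with
    | zero => exact List.nodup_nil
    | succ k ih => rw [hXsucc]; exact ((hstepf (X k) _) ⟨ih, hεpos k⟩).1
  have hprops := fun k => hstepf (X k) (1/(k+1)) ⟨hnd k, hεpos k⟩
  have hpre1 : ∀ k, X k <+: X (k+1) := fun k => (hprops k).2.1
  have hpre : ∀ j k, j ≤ k → X j <+: X k := by
    intro j k hjk
    induction k with
    | zero => rw [Nat.le_zero.1 hjk]
    | succ k ih =>
      rcases Nat.lt_or_ge j (k+1) with h | h
      · exact (ih (by omega)).trans (hpre1 k)
      · have : j = k + 1 := by omega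
        rw [this]
  have hlen : ∀ k, k ≤ (X k).length := by
    intro k
    induction k with
    | zero => omega
    | succ k ih =>
      rw [hXsucc k]
      have := (hprops k).2.2.1
      omega
  have hlenq : ∀ n : ℕ, n < (X (n+1)).length := fun n =>
    lt_of_lt_of_le (Nat.lt_succ_self n) (hlen (n+1))
  set q : ℕ → ℕ := fun n => (X (n+1))[n]'(hlenq n) with hq
  have hcoh : ∀ k n (h : n < (X k).length), (X k)[n]'h = q n := by
    intro k n h
    rcases le_total k (n+1) with hk | hk
    · exact (hpre k (n+1) hk).getElem h
    · exact ((hpre (n+1) k hk).getElem (hlenq n)).symm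
  have hinj : Function.Injective q := by
    intro n n' hqe
    set K := max n n' + 1 with hK
    have h1 : n < (X K).length := lt_of_lt_of_le (by omega) (hlen K)
    have h2 : n' < (X K).length := lt_of_lt_of_le (by omega) (hlen K)
    have e1 : (X K)[n]'h1 = (X K)[n']'h2 := by
      rw [hcoh K n h1, hcoh K n' h2]; exact hqe
    have := List.nodup_iff_injective_get.1 (hnd K)
      (show (X K).get ⟨n, h1⟩ = (X K).get ⟨n', h2⟩ by simpa using e1)
    simpa using this
  have hmk : ∀ k, k ≤ Nat.find (exists_fresh (X k)) := by
    intro k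
    induction k with
    | zero => omega
    | succ k ih =>
      by_contra hcon
      push_neg at hcon
      have hle : Nat.find (exists_fresh (X (k+1))) ≤ Nat.find (exists_fresh (X k)) := by omega
      have hmem : Nat.find (exists_fresh (X (k+1))) ∈ X (k+1) := by
        rcases Nat.lt_or_ge (Nat.find (exists_fresh (X (k+1)))) (Nat.find (exists_fresh (X k))) with h | h
        · have : ¬ (Nat.find (exists_fresh (X (k+1))) ∉ X k) := Nat.find_min (exists_fresh (X k)) h
          exact (hpre1 k).subset (not_not.1 this)
        · have : Nat.find (exists_fresh (X (k+1))) = Nat.find (exists_fresh (X k)) := by omega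
          rw [this]
          exact (hprops k).2.2.2.1
      exact (Nat.find_spec (exists_fresh (X (k+1)))) hmem
  have hmemX : ∀ j k, j < k → j ∈ X k := by
    intro j k hjk
    by_contra h
    have h2 := Nat.find_min' (exists_fresh (X k)) h
    have := hmk k
    omega
  have hsurj : Function.Surjective q := by
    intro val
    obtain ⟨i, hi, hival⟩ :=
      List.mem_iff_getElem.1 (hmemX val (val+1) (Nat.lt_succ_self val))
    exact ⟨i, (hcoh (val+1) i hi) ▸ hival⟩
  have hps : ∀ k N, N ≤ (X k).length →
      ∑ n ∈ Finset.range N, A (q n) = (((X k).take N).map A).sum := by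
    intro k N
    induction N with
    | zero => simp
    | succ N ihN =>
      intro hN
      have hNlt : N < (X k).length := by omega
      have hNlt' : N < ((X k).map A).length := by simpa using hNlt
      rw [Finset.sum_range_succ, ihN (by omega), List.map_take, List.map_take,
        List.sum_take_succ ((X k).map A) N hNlt', List.getElem_map]
      rw [hcoh k N hNlt]
  refine ⟨Equiv.ofBijective q ⟨hinj, hsurj⟩, ?_⟩
  rw [Metric.tendsto_atTop]
  intro η hη
  set η1 := η / 8 with hη1
  have hη1pos : 0 < η1 := by positivity
  obtain ⟨K1, hK1⟩ : ∃ K1, ∀ n ≥ K1, ‖A n‖ ≤ η1 := by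
    have h := A_tendsto_zero hσ
    rw [Metric.tendsto_atTop] at h
    obtain ⟨K1, hK1⟩ := h η1 hη1pos
    exact ⟨K1, fun n hn => by simpa [dist_eq_norm] using (hK1 n hn).le⟩
  obtain ⟨K2, hK2⟩ : ∃ K2 : ℕ, ∀ k : ℕ, K2 ≤ k → ((d:ℝ)+1) * (1/(k+1)) ≤ η1 := by
    obtain ⟨K2, hK2⟩ := exists_nat_gt (((d:ℝ)+1)/η1)
    refine ⟨K2, fun k hk => ?_⟩
    have hkk : ((d:ℝ)+1)/η1 < (k:ℝ)+1 := by
      have : (K2:ℝ) ≤ (k:ℝ) := by exact_mod_cast hk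
      linarith
    have h1 := (div_lt_iff₀ hη1pos).1 hkk
    rw [mul_comm] at h1
    have hk1pos : (0:ℝ) < (k:ℝ)+1 := by positivity
    rw [mul_one_div, div_le_iff₀ hk1pos]
    linarith
  set K := max K1 K2 + 1 with hKdef
  refine ⟨(X K).length + 1, fun N hN => ?_⟩
  set P : ℕ → Prop := fun k => (X k).length < N with hPdef
  have hPK : P K := by omega
  have hKN : K ≤ N := le_trans (hlen K) (by omega)
  set k := Nat.findGreatest P N with hkdef
  have hk1 : P k := Nat.findGreatest_spec hKN hPK
  have hkK : K ≤ k := Nat.le_findGreatest hKN hPK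
  have hk2 : N ≤ (X (k+1)).length := by
    by_cases h : k + 1 ≤ N
    · by_contra hcon
      push_neg at hcon
      exact Nat.findGreatest_is_greatest (Nat.lt_succ_self k) h hcon
    · have := hlen (k+1)
      omega
  rw [dist_eq_norm]
  have hpsum : ∑ n ∈ Finset.range N, A ((Equiv.ofBijective q ⟨hinj, hsurj⟩) n)
      = (((X (k+1)).take N).map A).sum := hps (k+1) N hk2
  rw [hpsum]
  have hb := (hprops k).2.2.2.2.1 N hk1
  rw [← hXsucc k] at hb
  obtain ⟨k', hk'⟩ : ∃ k', k = k' + 1 := ⟨k - 1, by omega⟩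
  have hendk' : ‖((X k).map A).sum - v‖ ≤ ((d:ℝ)+1)*(1/(k'+1)) := by
    rw [hk']
    exact (hprops k').2.2.2.2.2
  have hAm : ‖A (Nat.find (exists_fresh (X k)))‖ ≤ η1 := by
    refine hK1 (Nat.find (exists_fresh (X k))) ?_
    have := hmk k
    omega
  have hr1 : ‖((X k).map A).sum + A (Nat.find (exists_fresh (X k))) - v‖ ≤ ((d:ℝ)+1)*(1/(k'+1)) + η1 := by
    have harr : ((X k).map A).sum + A (Nat.find (exists_fresh (X k))) - v
        = (((X k).map A).sum - v) + A (Nat.find (exists_fresh (X k))) := by abel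
    rw [harr]
    calc ‖(((X k).map A).sum - v) + A (Nat.find (exists_fresh (X k)))‖
        ≤ ‖((X k).map A).sum - v‖ + ‖A (Nat.find (exists_fresh (X k)))‖ := norm_add_le _ _
      _ ≤ ((d:ℝ)+1)*(1/(k'+1)) + η1 := add_le_add hendk' hAm
  have h1 : ((d:ℝ)+1)*(1/(k'+1)) ≤ η1 := hK2 k' (by omega)
  have h2 : ((d:ℝ)+1)*(1/(k+1)) ≤ η1 := hK2 k (by omega)
  have hfinal : ‖(((X (k+1)).take N).map A).sum - v‖ ≤ 7 * η1 := by
    linarith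
  have : 7 * η1 < η := by rw [hη1]; linarith
  linarith

end Reach


/-- Lévy–Steinitz for independent finite sequences: if `K(ā) = {0}` then every
vector `v ∈ ℝ^d` is attained by some rearrangement. -/
theorem levy_steinitz_independent (d : ℕ) (hd : 0 < d) (a : Fin d → ℕ → ℝ)
    (hcc : ∀ i, CondConv (a i))
    (hind : ∀ c : Fin d → ℝ, (Summable fun n => |∑ i, c i * a i n|) → c = 0)
    (v : Fin d → ℝ) :
    ∃ p : Equiv.Perm ℕ, ∀ i,
      Tendsto (fun N => ∑ n ∈ Finset.range N, a i (p n)) atTop (nhds (v i)) := by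
  classical
  set A : ℕ → (Fin d → ℝ) := fun n i => a i n with hA
  choose σ hσc using fun i => (hcc i).1
  have hσ : Tendsto (fun N => ∑ n ∈ Finset.range N, A n) atTop (nhds σ) := by
    rw [tendsto_pi_nhds]
    intro i
    have heq : ∀ N, (∑ n ∈ Finset.range N, A n) i = ∑ n ∈ Finset.range N, a i n := by
      intro N; rw [Finset.sum_apply]
    exact Tendsto.congr (fun N => (heq N).symm) (hσc i)
  have hns : ∀ c : Fin d → ℝ, c ≠ 0 → ¬ Summable (fun n => |∑ i, c i * A n i|) :=
    fun c hc hs => hc (hind c hs)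
  obtain ⟨p, hp⟩ := main_perm hσ hns v
  refine ⟨p, fun i => ?_⟩
  have h1 := (tendsto_pi_nhds.1 hp) i
  refine Tendsto.congr (fun N => ?_) h1
  rw [Finset.sum_apply]
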